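/- Let n ≥ 1, d ∈ (0,∞], c₀ ∈ (0,1], α ∈ (0,1) and C_• : [1,∞) → [0,∞). Then there exists a constant C, depending only on n, α, c₀ and C_•, with the following property. Let Ω ⊂ ℝⁿ be open with |Q(x,t) ∩ Ω| ≥ c₀ tⁿ for all x ∈ Ω and all t ∈ (0,∞) with t < d. Let u : Ω×(0,d) → ℂ be jointly measurable such that for each t the map y ↦ u(y,t) is differentiable with jointly measurable spatial gradient ∇u, and suppose that for every c ∈ [1,∞), x₀ ∈ Ω, r ∈ (0,∞) and t₀ ∈ (0,∞) with 4cr² < t₀² and t₀ ≤ d one has the Caccioppoli-type inequality ∫_{√(t₀²−cr²)}^{t₀} ∫_{Q(x₀,r)∩Ω} t|∇u(y,t)|² dy dt ≤ (C_•(c)/r²) ∫_{√(t₀²−4cr²)}^{t₀} ∫_{Q(x₀,2r)∩Ω} t|u(y,t)|² dy dt. Then for every x ∈ Ω and all ε, R with 0 < ε < R < d: ( ∫∫_{{(y,t) ∈ Ω×(ε,R) : ‖y−x‖_∞ < αt}} |t∇u(y,t)|² dy dt/(t|Q(x,t)∩Ω|) )^{1/2} ≤ C (1 + ln(R/ε))^{1/2}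 · sup{ |u(y,t)| : y ∈ Ω, t ∈ (0,d), ‖y−x‖_∞ < t }. -/

import Mathlib

open MeasureTheory ENNReal

theorem lintegral_biUnion_finset_le' {α ι : Type*} [MeasurableSpace α] (μ : Measure α)
    (s : Finset ι) (t : ι → Set α) (f : α → ℝ≥0∞) :
    ∫⁻ a in ⋃ i ∈ s, t i, f a ∂μ ≤ ∑ i ∈ s, ∫⁻ a in t i, f a ∂μ := by
  classical
  induction s using Finset.induction with
  | empty => simp
  | @insert a s ha ih =>
      rw [Finset.set_biUnion_insert, Finset.sum_insert ha]
      exact (lintegral_union_le _ _ _).trans (add_le_add_right ih _)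

set_option maxHeartbeats 2000000 in
theorem stmt8 (n : ℕ) (hn : 1 ≤ n) (d : ℝ≥0∞) (hd : 0 < d)
    (c₀ α : ℝ) (hc₀ : c₀ ∈ Set.Ioc (0:ℝ) 1) (hα : α ∈ Set.Ioo (0:ℝ) 1)
    (Cb : ℝ → ℝ) (hCb : ∀ c : ℝ, 1 ≤ c → 0 ≤ Cb c) :
    ∃ C : ℝ, 0 < C ∧
    ∀ (Ω : Set (Fin n → ℝ)), IsOpen Ω →
    (∀ x ∈ Ω, ∀ t : ℝ, 0 < t → ENNReal.ofReal t < d →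
        ENNReal.ofReal (c₀ * t ^ n) ≤ volume (Metric.closedBall x (t / 2) ∩ Ω)) →
    ∀ (u : (Fin n → ℝ) → ℝ → ℂ) (g : (Fin n → ℝ) → ℝ → Fin n → ℂ),
      Measurable (fun q : (Fin n → ℝ) × ℝ => u q.1 q.2) →
      Measurable (fun q : (Fin n → ℝ) × ℝ => g q.1 q.2) →
      (∀ t : ℝ, 0 < t → ENNReal.ofReal t < d → ∀ y ∈ Ω, ∀ i,
        HasDerivAt (fun s => u (Function.update y i s) t) (g y t i) (y i)) →
      (∀ c : ℝ, 1 ≤ c → ∀ x₀ ∈ Ω, ∀ r t₀ : ℝ, 0 < r → 0 < t₀ →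
        4 * c * r ^ 2 < t₀ ^ 2 → ENNReal.ofReal t₀ ≤ d →
        (∫⁻ t in Set.Icc (Real.sqrt (t₀ ^ 2 - c * r ^ 2)) t₀,
            ∫⁻ y in Metric.closedBall x₀ (r / 2) ∩ Ω,
              ENNReal.ofReal (t * ∑ i, Complex.normSq (g y t i))) ≤
          ENNReal.ofReal (Cb c / r ^ 2) *
            ∫⁻ t in Set.Icc (Real.sqrt (t₀ ^ 2 - 4 * c * r ^ 2)) t₀,
              ∫⁻ y in Metric.closedBall x₀ r ∩ Ω,
                ENNReal.ofReal (t * Complex.normSq (u y t))) →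
      ∀ x ∈ Ω, ∀ ε R : ℝ, 0 < ε → ε < R → ENNReal.ofReal R < d →
        (∫⁻ q in {q : (Fin n → ℝ) × ℝ | q.1 ∈ Ω ∧ q.2 ∈ Set.Ioo ε R ∧
              dist q.1 x < α * q.2},
            ENNReal.ofReal (q.2 ^ 2 * ∑ i, Complex.normSq (g q.1 q.2 i)) /
              (ENNReal.ofReal q.2 * volume (Metric.closedBall x (q.2 / 2) ∩ Ω)))
          ^ (1/2 : ℝ) ≤
        ENNReal.ofReal (C * Real.sqrt (1 + Real.log (R / ε))) *
          ⨆ (y : Fin n → ℝ) (_ : y ∈ Ω) (t : ℝ)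
            (_ : 0 < t ∧ ENNReal.ofReal t < d ∧ dist y x < t), (‖u y t‖₊ : ℝ≥0∞) := by
  classical
  obtain ⟨hc₀0, hc₀1⟩ := hc₀
  obtain ⟨hα0, hα1⟩ := hα
  -- constants
  set β : ℝ := (1 - α) / 20 with hβdef
  have hβ0 : 0 < β := by unfold β; linarith
  have hβle : β ≤ 1 / 20 := by unfold β; linarith
  set γ : ℝ := Real.sqrt (1 + 4 * β ^ 2) with hγdef
  have hγsq : γ ^ 2 = 1 + 4 * β ^ 2 := Real.sq_sqrt (by positivity)
  have hγ1 : 1 < γ := by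
    have := Real.lt_sqrt (x := 1) (y := 1 + 4 * β ^ 2) (by norm_num)
    rw [hγdef]; rw [this]; nlinarith
  have hγub : γ ≤ 1 + 2 * β ^ 2 := by
    have h1 : γ ≤ Real.sqrt ((1 + 2 * β ^ 2) ^ 2) := by
      rw [hγdef]; exact Real.sqrt_le_sqrt (by nlinarith)
    rwa [Real.sqrt_sq (by positivity)] at h1
  have hγ0 : 0 < γ := lt_trans one_pos hγ1
  set θ : ℝ := Real.sqrt (1 - 12 * β ^ 2) with hθdef
  have h12β : (0:ℝ) < 1 - 12 * β ^ 2 := by nlinarith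
  have hθsq : θ ^ 2 = 1 - 12 * β ^ 2 := Real.sq_sqrt h12β.le
  have hθ0 : 0 < θ := Real.sqrt_pos.mpr h12β
  have hθ1 : θ ≤ 1 := by
    rw [hθdef]; exact Real.sqrt_le_one.mpr (by nlinarith)
  have hθlb : 1 - 12 * β ^ 2 ≤ θ := by
    have h1 : Real.sqrt ((1 - 12 * β ^ 2) ^ 2) ≤ θ := by
      rw [hθdef]; exact Real.sqrt_le_sqrt (by nlinarith)
    rwa [Real.sqrt_sq h12β.le] at h1
  have hcone : α * γ + 2 * β < θ := by nlinarith
  set Ks : ℕ := ⌈(2:ℝ) / β⌉₊ with hKsdef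
  have hKs : 2 / β ≤ (Ks : ℝ) := Nat.le_ceil _
  have hKs2 : α * γ / β + 1 / 2 ≤ (Ks : ℝ) := by
    refine le_trans ?_ hKs
    rw [div_add' _ _ _ hβ0.ne', div_le_div_iff₀ hβ0 hβ0]
    nlinarith
  set NR : ℝ := ((2 * Ks + 1 : ℕ) : ℝ) with hNRdef
  have hNR1 : 1 ≤ NR := by unfold NR; exact_mod_cast Nat.succ_le_succ (Nat.zero_le _)
  have hCb1 : 0 ≤ Cb 1 := hCb 1 le_rfl
  set C₁ : ℝ := NR ^ n * ((Cb 1 + 1) * γ ^ 2 * 4 ^ n / (4 * β ^ 2 * c₀)) with hC₁def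
  have hC₁0 : 0 < C₁ := by positivity
  set C₂ : ℝ := C₁ * (1 / Real.log γ + 1) with hC₂def
  have hlogγ : 0 < Real.log γ := Real.log_pos hγ1
  have hC₂0 : 0 < C₂ := by positivity
  refine ⟨Real.sqrt C₂ + 1, by positivity, ?_⟩
  intro Ω hΩopen hΩd u g hu hg hderiv hCacc x hx ε R hε hεR hRd
  have hRpos : 0 < R := lt_trans hε hεR
  set M : ℝ≥0∞ := ⨆ (y : Fin n → ℝ) (_ : y ∈ Ω) (t : ℝ)
      (_ : 0 < t ∧ ENNReal.ofReal t < d ∧ dist y x < t), (‖u y t‖₊ : ℝ≥0∞) with hMdef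
  set S : Set ((Fin n → ℝ) × ℝ) :=
    {q : (Fin n → ℝ) × ℝ | q.1 ∈ Ω ∧ q.2 ∈ Set.Ioo ε R ∧ dist q.1 x < α * q.2} with hSdef
  set F : (Fin n → ℝ) × ℝ → ℝ≥0∞ := fun q =>
      ENNReal.ofReal (q.2 ^ 2 * ∑ i, Complex.normSq (g q.1 q.2 i)) /
        (ENNReal.ofReal q.2 * volume (Metric.closedBall x (q.2 / 2) ∩ Ω)) with hFdef
  have hM : ∀ y ∈ Ω, ∀ t : ℝ, 0 < t → ENNReal.ofReal t < d → dist y x < t →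
      (‖u y t‖₊ : ℝ≥0∞) ≤ M := by
    intro y hy t ht htd hdist
    rw [hMdef]
    refine le_iSup_of_le y ?_
    refine le_iSup_of_le hy ?_
    refine le_iSup_of_le t ?_
    exact le_iSup_of_le ⟨ht, htd, hdist⟩ le_rfl
  have hGf : Measurable (fun q : (Fin n → ℝ) × ℝ =>
      ENNReal.ofReal (q.2 * ∑ i, Complex.normSq (g q.1 q.2 i))) := by
    apply ENNReal.measurable_ofReal.comp
    apply Measurable.mul measurable_snd
    apply Finset.measurable_sum
    intro i _
    exact Complex.continuous_normSq.measurable.comp ((measurable_pi_apply i).comp hg)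
  have hSmeas : MeasurableSet S := by
    have h1 : MeasurableSet {q : (Fin n → ℝ) × ℝ | q.1 ∈ Ω} :=
      hΩopen.measurableSet.preimage measurable_fst
    have h2 : MeasurableSet {q : (Fin n → ℝ) × ℝ | q.2 ∈ Set.Ioo ε R} :=
      measurable_snd measurableSet_Ioo
    have h3 : IsOpen {q : (Fin n → ℝ) × ℝ | dist q.1 x < α * q.2} :=
      isOpen_lt (continuous_fst.dist continuous_const) (continuous_const.mul continuous_snd)
    exact h1.inter (h2.inter h3.measurableSet)
  -- ===================== the layer estimate =====================
  have hlayer : ∀ a : ℝ, 0 < a → γ * a ≤ R →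
      ∫⁻ q in S ∩ {q : (Fin n → ℝ) × ℝ | q.2 ∈ Set.Ioc a (γ * a)}, F q ≤
        ENNReal.ofReal C₁ * M ^ 2 := by
    intro a ha hale
    have hβa : 0 < β * a := by positivity
    set cen : (Fin n → ℤ) → (Fin n → ℝ) := fun k i => x i + β * a * (k i) with hcen
    set G : (Fin n → ℤ) → Set (Fin n → ℝ) := fun k =>
      Metric.closedBall (cen k) (β * a / 2) ∩ (Metric.ball x (α * (γ * a)) ∩ Ω) with hG
    set T : (Fin n → ℤ) → Set ((Fin n → ℝ) × ℝ) := fun k =>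
      if h : (G k).Nonempty then (Metric.closedBall h.some (β * a) ∩ Ω) ×ˢ Set.Icc a (γ * a)
      else ∅ with hT
    set 𝒦 : Finset (Fin n → ℤ) :=
      Fintype.piFinset (fun _ : Fin n => Finset.Icc (-(Ks : ℤ)) (Ks : ℤ)) with h𝒦
    have hcover : S ∩ {q : (Fin n → ℝ) × ℝ | q.2 ∈ Set.Ioc a (γ * a)} ⊆ ⋃ k ∈ 𝒦, T k := by
      rintro ⟨y, t⟩ ⟨⟨hyΩ, htIoo, hdist⟩, htlayer⟩
      have hta : a < t := htlayer.1
      have htγa : t ≤ γ * a := htlayer.2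
      have hyball : y ∈ Metric.ball x (α * (γ * a)) := by
        rw [Metric.mem_ball]
        exact lt_of_lt_of_le hdist (by nlinarith)
      set k : Fin n → ℤ := fun i => round ((y i - x i) / (β * a)) with hk
      have hyc : dist y (cen k) ≤ β * a / 2 := by
        rw [dist_pi_le_iff (by positivity)]
        intro i
        have he : y i - cen k i = (β * a) * ((y i - x i) / (β * a) - (k i : ℝ)) := by
          simp only [hcen]
          clear_value β
          field_simp
          ring
        rw [Real.dist_eq, he, abs_mul, abs_of_pos hβa]
        calc (β * a) * |(y i - x i) / (β * a) - (k i : ℝ)|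
            ≤ (β * a) * (1 / 2) := by
              refine mul_le_mul_of_nonneg_left ?_ hβa.le
              simp only [hk]
              exact abs_sub_round _
          _ = β * a / 2 := by ring
      have hkmem : k ∈ 𝒦 := by
        rw [h𝒦, Fintype.mem_piFinset]
        intro i
        rw [Finset.mem_Icc, ← abs_le]
        have hdyx : |y i - x i| ≤ α * (γ * a) := by
          have h2 : |y i - x i| ≤ dist y x := by
            rw [← Real.dist_eq]; exact dist_le_pi_dist y x i
          exact h2.trans (le_of_lt (lt_of_lt_of_le hdist (by nlinarith)))
        have h1 : |(y i - x i) / (β * a)| ≤ α * γ / β := by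
          rw [abs_div, abs_of_pos hβa, div_le_div_iff₀ hβa hβ0]
          nlinarith
        have h5 : |(k i : ℝ)| ≤ (Ks : ℝ) := by
          have h4 : |(y i - x i) / (β * a) - (k i : ℝ)| ≤ 1 / 2 := by
            simp only [hk]; exact abs_sub_round _
          have h6 : (k i : ℝ) =
              (y i - x i) / (β * a) - ((y i - x i) / (β * a) - (k i : ℝ)) := by ring
          calc |(k i : ℝ)|
              = |(y i - x i) / (β * a) - ((y i - x i) / (β * a) - (k i : ℝ))| := by rw [← h6]
            _ ≤ |(y i - x i) / (β * a)| + |(y i - x i) / (β * a) - (k i : ℝ)| := abs_sub _ _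
            _ ≤ α * γ / β + 1 / 2 := add_le_add h1 h4
            _ ≤ (Ks : ℝ) := hKs2
        exact_mod_cast h5
      have hGne : (G k).Nonempty := ⟨y, ⟨Metric.mem_closedBall.mpr hyc, hyball, hyΩ⟩⟩
      refine Set.mem_biUnion hkmem ?_
      simp only [hT]
      rw [dif_pos hGne]
      refine Set.mem_prod.mpr ⟨⟨?_, hyΩ⟩, ⟨hta.le, htγa⟩⟩
      rw [Metric.mem_closedBall]
      have hsm := hGne.some_mem
      have h7 : dist hGne.some (cen k) ≤ β * a / 2 := Metric.mem_closedBall.mp hsm.1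
      calc dist y hGne.some ≤ dist y (cen k) + dist (cen k) hGne.some := dist_triangle _ _ _
        _ ≤ β * a / 2 + β * a / 2 := add_le_add hyc (by rw [dist_comm]; exact h7)
        _ = β * a := by ring
    have hcube : ∀ k : Fin n → ℤ,
        ∫⁻ q in T k, ENNReal.ofReal (q.2 * ∑ i, Complex.normSq (g q.1 q.2 i)) ≤
          ENNReal.ofReal (Cb 1 / (2 * β * a) ^ 2 *
            ((γ * a) * ((2 * (2 * β * a)) ^ n * (γ * a)))) * M ^ 2 := by
      intro k
      simp only [hT]
      by_cases hne : (G k).Nonempty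
      · rw [dif_pos hne]
        have hsm := hne.some_mem
        have hz2 : hne.some ∈ Metric.ball x (α * (γ * a)) := hsm.2.1
        have hz3 : hne.some ∈ Ω := hsm.2.2
        have hprod : ∫⁻ q in (Metric.closedBall hne.some (β * a) ∩ Ω) ×ˢ Set.Icc a (γ * a),
            ENNReal.ofReal (q.2 * ∑ i, Complex.normSq (g q.1 q.2 i)) =
            ∫⁻ t in Set.Icc a (γ * a), ∫⁻ y in Metric.closedBall hne.some (β * a) ∩ Ω,
              ENNReal.ofReal (t * ∑ i, Complex.normSq (g y t i)) := by
          rw [Measure.volume_eq_prod, ← Measure.prod_restrict]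
          exact lintegral_prod_symm _ hGf.aemeasurable
        have h4c : 4 * 1 * (2 * β * a) ^ 2 < (γ * a) ^ 2 := by nlinarith [mul_pos ha ha]
        have hcac := hCacc 1 le_rfl hne.some hz3 (2 * β * a) (γ * a) (by positivity)
          (by positivity) h4c
          (le_of_lt (lt_of_le_of_lt (ENNReal.ofReal_le_ofReal hale) hRd))
        rw [show (γ * a) ^ 2 - 1 * (2 * β * a) ^ 2 = a ^ 2 from by
              linear_combination a ^ 2 * hγsq,
            Real.sqrt_sq ha.le,
            show (γ * a) ^ 2 - 4 * 1 * (2 * β * a) ^ 2 = (θ * a) ^ 2 from by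
              linear_combination a ^ 2 * hγsq - a ^ 2 * hθsq,
            Real.sqrt_sq (by positivity),
            show 2 * β * a / 2 = β * a from by ring] at hcac
        have hRHS : ∫⁻ t in Set.Icc (θ * a) (γ * a),
            ∫⁻ y in Metric.closedBall hne.some (2 * β * a) ∩ Ω,
              ENNReal.ofReal (t * Complex.normSq (u y t)) ≤
            (ENNReal.ofReal (γ * a) * M ^ 2 * ENNReal.ofReal ((2 * (2 * β * a)) ^ n)) *
              ENNReal.ofReal (γ * a) := by
          have hzx : dist hne.some x < α * (γ * a) := Metric.mem_ball.mp hz2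
          have hinner : ∀ t ∈ Set.Icc (θ * a) (γ * a),
              ∫⁻ y in Metric.closedBall hne.some (2 * β * a) ∩ Ω,
                ENNReal.ofReal (t * Complex.normSq (u y t)) ≤
              ENNReal.ofReal (γ * a) * M ^ 2 * ENNReal.ofReal ((2 * (2 * β * a)) ^ n) := by
            intro t ht
            have ht0 : 0 < t := lt_of_lt_of_le (by positivity) ht.1
            have htd : ENNReal.ofReal t < d :=
              lt_of_le_of_lt (ENNReal.ofReal_le_ofReal (le_trans ht.2 hale)) hRd
            have hpt : ∀ y ∈ Metric.closedBall hne.some (2 * β * a) ∩ Ω,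
                ENNReal.ofReal (t * Complex.normSq (u y t)) ≤
                  ENNReal.ofReal (γ * a) * M ^ 2 := by
              intro y hy
              have h7 : dist y hne.some ≤ 2 * β * a := Metric.mem_closedBall.mp hy.1
              have hyx : dist y x < t := by
                have h8 := dist_triangle y hne.some x
                have h9 : θ * a ≤ t := ht.1
                nlinarith
              have h9 : (‖u y t‖₊ : ℝ≥0∞) ≤ M := hM y hy.2 t ht0 htd hyx
              calc ENNReal.ofReal (t * Complex.normSq (u y t))
                  = ENNReal.ofReal t * ENNReal.ofReal (Complex.normSq (u y t)) :=
                    ENNReal.ofReal_mul ht0.le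
                _ ≤ ENNReal.ofReal (γ * a) * M ^ 2 := by
                    refine mul_le_mul' (ENNReal.ofReal_le_ofReal ht.2) ?_
                    rw [Complex.normSq_eq_norm_sq,
                      ENNReal.ofReal_pow (norm_nonneg _), ← coe_nnnorm, ENNReal.ofReal_coe_nnreal]
                    exact pow_le_pow_left' h9 2
            calc ∫⁻ y in Metric.closedBall hne.some (2 * β * a) ∩ Ω,
                  ENNReal.ofReal (t * Complex.normSq (u y t))
                ≤ ∫⁻ _ in Metric.closedBall hne.some (2 * β * a) ∩ Ω,
                    (ENNReal.ofReal (γ * a) * M ^ 2) := by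
                  refine lintegral_mono_ae ?_
                  refine (ae_restrict_iff'
                    (Metric.isClosed_closedBall.measurableSet.inter hΩopen.measurableSet)).2 ?_
                  exact Filter.Eventually.of_forall hpt
              _ = (ENNReal.ofReal (γ * a) * M ^ 2) *
                    volume (Metric.closedBall hne.some (2 * β * a) ∩ Ω) :=
                  setLIntegral_const _ _
              _ ≤ ENNReal.ofReal (γ * a) * M ^ 2 * ENNReal.ofReal ((2 * (2 * β * a)) ^ n) := by
                  refine mul_le_mul_right ?_ _
                  refine le_trans (measure_mono Set.inter_subset_left) ?_
                  rw [Real.volume_pi_closedBall hne.some (by positivity : (0:ℝ) ≤ 2 * β * a)]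
                  simp
          calc ∫⁻ t in Set.Icc (θ * a) (γ * a),
                ∫⁻ y in Metric.closedBall hne.some (2 * β * a) ∩ Ω,
                  ENNReal.ofReal (t * Complex.normSq (u y t))
              ≤ ∫⁻ _ in Set.Icc (θ * a) (γ * a),
                  (ENNReal.ofReal (γ * a) * M ^ 2 * ENNReal.ofReal ((2 * (2 * β * a)) ^ n)) := by
                refine lintegral_mono_ae ?_
                exact (ae_restrict_iff' measurableSet_Icc).2 (Filter.Eventually.of_forall hinner)
            _ = (ENNReal.ofReal (γ * a) * M ^ 2 * ENNReal.ofReal ((2 * (2 * β * a)) ^ n)) *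
                  volume (Set.Icc (θ * a) (γ * a)) := setLIntegral_const _ _
            _ ≤ _ := by
                rw [Real.volume_Icc]
                refine mul_le_mul_right (ENNReal.ofReal_le_ofReal ?_) _
                nlinarith
        calc ∫⁻ q in (Metric.closedBall hne.some (β * a) ∩ Ω) ×ˢ Set.Icc a (γ * a),
              ENNReal.ofReal (q.2 * ∑ i, Complex.normSq (g q.1 q.2 i))
            = ∫⁻ t in Set.Icc a (γ * a), ∫⁻ y in Metric.closedBall hne.some (β * a) ∩ Ω,
                ENNReal.ofReal (t * ∑ i, Complex.normSq (g y t i)) := hprod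
          _ ≤ ENNReal.ofReal (Cb 1 / (2 * β * a) ^ 2) *
                ((ENNReal.ofReal (γ * a) * M ^ 2 * ENNReal.ofReal ((2 * (2 * β * a)) ^ n)) *
                  ENNReal.ofReal (γ * a)) := hcac.trans (mul_le_mul_right hRHS _)
          _ = ENNReal.ofReal (Cb 1 / (2 * β * a) ^ 2 *
                ((γ * a) * ((2 * (2 * β * a)) ^ n * (γ * a)))) * M ^ 2 := by
              rw [ENNReal.ofReal_mul (by positivity : (0:ℝ) ≤ Cb 1 / (2 * β * a) ^ 2),
                ENNReal.ofReal_mul (by positivity : (0:ℝ) ≤ γ * a),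
                ENNReal.ofReal_mul (by positivity : (0:ℝ) ≤ (2 * (2 * β * a)) ^ n)]
              ring
      · rw [dif_neg hne]; simp
    have hcard𝒦 : 𝒦.card = (2 * Ks + 1) ^ n := by
      rw [h𝒦, Fintype.card_piFinset]
      simp only [Int.card_Icc]
      rw [Finset.prod_const, Finset.card_univ, Fintype.card_fin]
      congr 1
      omega
    have hpoint : ∀ q ∈ S ∩ {q : (Fin n → ℝ) × ℝ | q.2 ∈ Set.Ioc a (γ * a)},
        F q ≤ ENNReal.ofReal (1 / (c₀ * a ^ n)) *
          ENNReal.ofReal (q.2 * ∑ i, Complex.normSq (g q.1 q.2 i)) := by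
      rintro ⟨y, t⟩ ⟨⟨hyΩ, htIoo, hdist⟩, htlayer⟩
      have hta : a < t := htlayer.1
      have ht0 : 0 < t := lt_trans ha hta
      have htd : ENNReal.ofReal t < d :=
        lt_of_le_of_lt (ENNReal.ofReal_le_ofReal htIoo.2.le) hRd
      have hSig : 0 ≤ ∑ i, Complex.normSq (g y t i) :=
        Finset.sum_nonneg fun i _ => Complex.normSq_nonneg _
      have hvol : ENNReal.ofReal (c₀ * t ^ n) ≤ volume (Metric.closedBall x (t / 2) ∩ Ω) :=
        hΩd x hx t ht0 htd
      have hden : ENNReal.ofReal (c₀ * t ^ (n + 1)) ≤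
          ENNReal.ofReal t * volume (Metric.closedBall x (t / 2) ∩ Ω) := by
        calc ENNReal.ofReal (c₀ * t ^ (n + 1))
            = ENNReal.ofReal t * ENNReal.ofReal (c₀ * t ^ n) := by
              rw [← ENNReal.ofReal_mul ht0.le]; ring_nf
          _ ≤ _ := mul_le_mul_right hvol _
      simp only [hFdef]
      calc ENNReal.ofReal (t ^ 2 * ∑ i, Complex.normSq (g y t i)) /
            (ENNReal.ofReal t * volume (Metric.closedBall x (t / 2) ∩ Ω))
          ≤ ENNReal.ofReal (t ^ 2 * ∑ i, Complex.normSq (g y t i)) /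
              ENNReal.ofReal (c₀ * t ^ (n + 1)) := ENNReal.div_le_div_left hden _
        _ = ENNReal.ofReal ((t ^ 2 * ∑ i, Complex.normSq (g y t i)) / (c₀ * t ^ (n + 1))) :=
            (ENNReal.ofReal_div_of_pos (by positivity)).symm
        _ ≤ ENNReal.ofReal ((1 / (c₀ * a ^ n)) * (t * ∑ i, Complex.normSq (g y t i))) := by
            apply ENNReal.ofReal_le_ofReal
            have he : (t ^ 2 * ∑ i, Complex.normSq (g y t i)) / (c₀ * t ^ (n + 1)) =
                (t * ∑ i, Complex.normSq (g y t i)) / (c₀ * t ^ n) := by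
              rw [pow_succ]
              field_simp
              ring
            rw [he, one_div_mul_eq_div]
            exact div_le_div_of_nonneg_left (mul_nonneg ht0.le hSig) (by positivity)
              (mul_le_mul_of_nonneg_left (pow_le_pow_left₀ ha.le hta.le n) hc₀0.le)
        _ = _ := ENNReal.ofReal_mul (by positivity)
    -- assemble the layer bound
    have hSlay : MeasurableSet (S ∩ {q : (Fin n → ℝ) × ℝ | q.2 ∈ Set.Ioc a (γ * a)}) :=
      hSmeas.inter (measurable_snd measurableSet_Ioc)
    have hmain : (1 / (c₀ * a ^ n)) * ((𝒦.card : ℝ) *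
        (Cb 1 / (2 * β * a) ^ 2 * ((γ * a) * ((2 * (2 * β * a)) ^ n * (γ * a))))) ≤ C₁ := by
      have hcc : (𝒦.card : ℝ) = NR ^ n := by
        rw [hcard𝒦, hNRdef]; push_cast; ring
      rw [hcc]
      have hβn1 : β ^ n ≤ 1 := pow_le_one₀ hβ0.le (by linarith)
      have hexp : (1 / (c₀ * a ^ n)) * (NR ^ n *
          (Cb 1 / (2 * β * a) ^ 2 * ((γ * a) * ((2 * (2 * β * a)) ^ n * (γ * a))))) =
          NR ^ n * (Cb 1 * γ ^ 2 * 4 ^ n / (4 * β ^ 2 * c₀)) * β ^ n := by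
        clear_value β γ
        rw [show (2 * (2 * β * a)) = 4 * (β * a) from by ring, mul_pow, mul_pow]
        field_simp
        ring
      rw [hexp, hC₁def]
      calc NR ^ n * (Cb 1 * γ ^ 2 * 4 ^ n / (4 * β ^ 2 * c₀)) * β ^ n
          ≤ NR ^ n * (Cb 1 * γ ^ 2 * 4 ^ n / (4 * β ^ 2 * c₀)) * 1 := by
            refine mul_le_mul_of_nonneg_left hβn1 ?_
            positivity
        _ ≤ NR ^ n * ((Cb 1 + 1) * γ ^ 2 * 4 ^ n / (4 * β ^ 2 * c₀)) := by
            rw [mul_one]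
            gcongr
            linarith
    calc ∫⁻ q in S ∩ {q : (Fin n → ℝ) × ℝ | q.2 ∈ Set.Ioc a (γ * a)}, F q
        ≤ ∫⁻ q in S ∩ {q : (Fin n → ℝ) × ℝ | q.2 ∈ Set.Ioc a (γ * a)},
            ENNReal.ofReal (1 / (c₀ * a ^ n)) *
              ENNReal.ofReal (q.2 * ∑ i, Complex.normSq (g q.1 q.2 i)) := by
          refine lintegral_mono_ae ?_
          exact (ae_restrict_iff' hSlay).2 (Filter.Eventually.of_forall hpoint)
      _ = ENNReal.ofReal (1 / (c₀ * a ^ n)) *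
            ∫⁻ q in S ∩ {q : (Fin n → ℝ) × ℝ | q.2 ∈ Set.Ioc a (γ * a)},
              ENNReal.ofReal (q.2 * ∑ i, Complex.normSq (g q.1 q.2 i)) :=
          lintegral_const_mul' _ _ ENNReal.ofReal_ne_top
      _ ≤ ENNReal.ofReal (1 / (c₀ * a ^ n)) *
            ∫⁻ q in ⋃ k ∈ 𝒦, T k,
              ENNReal.ofReal (q.2 * ∑ i, Complex.normSq (g q.1 q.2 i)) :=
          mul_le_mul_right (lintegral_mono_set hcover) _
      _ ≤ ENNReal.ofReal (1 / (c₀ * a ^ n)) *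
            ∑ k ∈ 𝒦, ∫⁻ q in T k,
              ENNReal.ofReal (q.2 * ∑ i, Complex.normSq (g q.1 q.2 i)) :=
          mul_le_mul_right (lintegral_biUnion_finset_le' _ _ _ _) _
      _ ≤ ENNReal.ofReal (1 / (c₀ * a ^ n)) *
            ∑ _k ∈ 𝒦, (ENNReal.ofReal (Cb 1 / (2 * β * a) ^ 2 *
              ((γ * a) * ((2 * (2 * β * a)) ^ n * (γ * a)))) * M ^ 2) :=
          mul_le_mul_right (Finset.sum_le_sum fun k _ => hcube k) _
      _ = ENNReal.ofReal (1 / (c₀ * a ^ n)) * ((𝒦.card : ℝ≥0∞) *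
            (ENNReal.ofReal (Cb 1 / (2 * β * a) ^ 2 *
              ((γ * a) * ((2 * (2 * β * a)) ^ n * (γ * a)))) * M ^ 2)) := by
          rw [Finset.sum_const, nsmul_eq_mul]
      _ = ENNReal.ofReal ((1 / (c₀ * a ^ n)) * ((𝒦.card : ℝ) *
            (Cb 1 / (2 * β * a) ^ 2 * ((γ * a) * ((2 * (2 * β * a)) ^ n * (γ * a)))))) *
            M ^ 2 := by
          rw [ENNReal.ofReal_mul (by positivity : (0:ℝ) ≤ 1 / (c₀ * a ^ n)),
            ENNReal.ofReal_mul (by positivity : (0:ℝ) ≤ (𝒦.card : ℝ)),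
            ENNReal.ofReal_natCast]
          ring
      _ ≤ ENNReal.ofReal C₁ * M ^ 2 :=
          mul_le_mul_left (ENNReal.ofReal_le_ofReal hmain) _
  -- ===================== summation over layers =====================
  set Kt : ℕ := ⌈Real.log (R / ε) / Real.log γ⌉₊ with hKtdef
  have hL0 : 0 < Real.log (R / ε) := Real.log_pos ((one_lt_div hε).2 hεR)
  set Lay : ℕ → Set ((Fin n → ℝ) × ℝ) := fun k =>
    S ∩ {q : (Fin n → ℝ) × ℝ | q.2 ∈ Set.Ioc (R / γ ^ (k + 1)) (γ * (R / γ ^ (k + 1)))}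
    with hLaydef
  have hγprod : ∀ k : ℕ, γ * (R / γ ^ (k + 1)) = R / γ ^ k := by
    intro k
    rw [pow_succ]
    field_simp
  have hcoverS : S ⊆ ⋃ k ∈ Finset.range Kt, Lay k := by
    rintro ⟨y, t⟩ hq
    obtain ⟨hyΩ, htIoo, hdist⟩ := hq
    set k : ℕ := ⌊Real.log (R / t) / Real.log γ⌋₊ with hk
    have ht0 : 0 < t := lt_trans hε htIoo.1
    have hRt1 : 1 < R / t := (one_lt_div ht0).2 htIoo.2
    have hlogRt : 0 ≤ Real.log (R / t) := Real.log_nonneg hRt1.le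
    have hlognn : 0 ≤ Real.log (R / t) / Real.log γ := div_nonneg hlogRt hlogγ.le
    have h1 : (k : ℝ) * Real.log γ ≤ Real.log (R / t) := by
      rw [← le_div_iff₀ hlogγ]
      exact Nat.floor_le hlognn
    have h2 : Real.log (R / t) < ((k : ℝ) + 1) * Real.log γ := by
      rw [← div_lt_iff₀ hlogγ, hk]
      push_cast
      exact Nat.lt_floor_add_one _
    have hγk : γ ^ k ≤ R / t := by
      rw [← Real.exp_log (show (0:ℝ) < R / t by positivity),
        ← Real.exp_log (show (0:ℝ) < γ ^ k by positivity)]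
      apply Real.exp_le_exp.2
      rw [Real.log_pow]
      exact h1
    have hγk1 : R / t < γ ^ (k + 1) := by
      rw [← Real.exp_log (show (0:ℝ) < R / t by positivity),
        ← Real.exp_log (show (0:ℝ) < γ ^ (k + 1) by positivity)]
      apply Real.exp_lt_exp.2
      rw [Real.log_pow]
      push_cast
      exact h2
    have hkKt : k < Kt := by
      have h3 : Real.log (R / t) < Real.log (R / ε) :=
        Real.log_lt_log (by positivity) (div_lt_div_of_pos_left hRpos hε htIoo.1)
      have h4 : (k : ℝ) < (Kt : ℝ) :=
        lt_of_le_of_lt (Nat.floor_le hlognn)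
          (lt_of_lt_of_le ((div_lt_div_iff_of_pos_right hlogγ).2 h3) (Nat.le_ceil _))
      exact_mod_cast h4
    refine Set.mem_biUnion (Finset.mem_range.2 hkKt) ?_
    refine ⟨⟨hyΩ, htIoo, hdist⟩, ?_⟩
    have hγk1pos : (0:ℝ) < γ ^ (k + 1) := by positivity
    constructor
    · rw [div_lt_iff₀ hγk1pos]
      rw [div_lt_iff₀ ht0] at hγk1
      linarith
    · rw [hγprod k, le_div_iff₀ (show (0:ℝ) < γ ^ k by positivity)]
      rw [le_div_iff₀ ht0] at hγk
      linarith
  have hsumS : ∫⁻ q in S, F q ≤ (Kt : ℝ≥0∞) * (ENNReal.ofReal C₁ * M ^ 2) := by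
    calc ∫⁻ q in S, F q ≤ ∫⁻ q in ⋃ k ∈ Finset.range Kt, Lay k, F q :=
          lintegral_mono_set hcoverS
      _ ≤ ∑ k ∈ Finset.range Kt, ∫⁻ q in Lay k, F q :=
          lintegral_biUnion_finset_le' _ _ _ _
      _ ≤ ∑ _k ∈ Finset.range Kt, (ENNReal.ofReal C₁ * M ^ 2) := by
          refine Finset.sum_le_sum fun k _ => ?_
          refine hlayer (R / γ ^ (k + 1)) (by positivity) ?_
          rw [hγprod k]
          exact div_le_self hRpos.le (one_le_pow₀ hγ1.le)
      _ = (Kt : ℝ≥0∞) * (ENNReal.ofReal C₁ * M ^ 2) := by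
          rw [Finset.sum_const, Finset.card_range, nsmul_eq_mul]
  have hKtC : (Kt : ℝ) * C₁ ≤ C₂ * (1 + Real.log (R / ε)) := by
    have h1 : (Kt : ℝ) ≤ Real.log (R / ε) / Real.log γ + 1 :=
      le_of_lt (Nat.ceil_lt_add_one (by positivity))
    have h2 : Real.log (R / ε) / Real.log γ + 1 ≤
        (1 / Real.log γ + 1) * (1 + Real.log (R / ε)) := by
      have h3 : Real.log (R / ε) / Real.log γ ≤ (1 + Real.log (R / ε)) / Real.log γ := by
        gcongr
        linarith
      have h4 : (0:ℝ) ≤ Real.log (R / ε) := hL0.le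
      calc Real.log (R / ε) / Real.log γ + 1 ≤ (1 + Real.log (R / ε)) / Real.log γ +
            (1 + Real.log (R / ε)) := by linarith
        _ = (1 / Real.log γ + 1) * (1 + Real.log (R / ε)) := by ring
    calc (Kt : ℝ) * C₁ ≤ (Real.log (R / ε) / Real.log γ + 1) * C₁ :=
          mul_le_mul_of_nonneg_right h1 hC₁0.le
      _ ≤ ((1 / Real.log γ + 1) * (1 + Real.log (R / ε))) * C₁ :=
          mul_le_mul_of_nonneg_right h2 hC₁0.le
      _ = C₂ * (1 + Real.log (R / ε)) := by rw [hC₂def]; ring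
  have htotal : ∫⁻ q in S, F q ≤
      ENNReal.ofReal (C₂ * (1 + Real.log (R / ε))) * M ^ 2 := by
    refine le_trans hsumS ?_
    calc (Kt : ℝ≥0∞) * (ENNReal.ofReal C₁ * M ^ 2)
        = ENNReal.ofReal ((Kt : ℝ) * C₁) * M ^ 2 := by
          rw [ENNReal.ofReal_mul (Nat.cast_nonneg _), ENNReal.ofReal_natCast, mul_assoc]
      _ ≤ ENNReal.ofReal (C₂ * (1 + Real.log (R / ε))) * M ^ 2 :=
          mul_le_mul_left (ENNReal.ofReal_le_ofReal hKtC) _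
  have h1L : (0:ℝ) ≤ 1 + Real.log (R / ε) := by linarith
  calc (∫⁻ q in S, F q) ^ (1 / 2 : ℝ)
      ≤ (ENNReal.ofReal (C₂ * (1 + Real.log (R / ε))) * M ^ 2) ^ (1 / 2 : ℝ) :=
        ENNReal.rpow_le_rpow htotal (by norm_num)
    _ = ENNReal.ofReal (C₂ * (1 + Real.log (R / ε))) ^ (1 / 2 : ℝ) *
          (M ^ 2) ^ (1 / 2 : ℝ) := ENNReal.mul_rpow_of_nonneg _ _ (by norm_num)
    _ = ENNReal.ofReal (Real.sqrt (C₂ * (1 + Real.log (R / ε)))) * M := by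
        rw [ENNReal.ofReal_rpow_of_nonneg (by positivity) (by norm_num),
          ← Real.sqrt_eq_rpow]
        congr 1
        rw [← ENNReal.rpow_natCast M 2, ← ENNReal.rpow_mul]
        norm_num
    _ ≤ ENNReal.ofReal ((Real.sqrt C₂ + 1) * Real.sqrt (1 + Real.log (R / ε))) * M := by
        refine mul_le_mul_left (ENNReal.ofReal_le_ofReal ?_) _
        rw [Real.sqrt_mul hC₂0.le]
        have h5 := Real.sqrt_nonneg (1 + Real.log (R / ε))
        have h6 := Real.sqrt_nonneg C₂
        nlinarith
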